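/- arXiv:1502.01822 — 2 statements merged into one kernel-verified Lean document; each statement's English description precedes it below -/
import Mathlib

section
/- Let a ∈ ℂ^n be nonzero, x ∈ ℂ^n, and y_r ≥ 0 a real number. For a unimodular complex number ω (|ω| = 1), define x^ω = x + ((√(y_r)·ω − ⟨a,x⟩)/‖a‖₂²)·a. Let ω* = phase(⟨a,x⟩). Then for every ω ∈ ℂ with |ω| = 1, ‖x^{ω*} − x‖₂ ≤ ‖x^ω − x‖₂; i.e., the phase selection of the simple Kaczmarz method minimizes the step length among all phase choices. -/
open scoped BigOperators ComplexConjugate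

/-- phase(w) = w/|w| if w ≠ 0, else 1. -/
noncomputable def phase (w : ℂ) : ℂ := if w = 0 then 1 else w / ((‖w‖ : ℝ) : ℂ)

/-- Euclidean norm of a complex vector. -/
noncomputable def evnorm {ι : Type*} [Fintype ι] (v : ι → ℂ) : ℝ :=
  Real.sqrt (∑ i, ‖v i‖ ^ 2)

/-- Euclidean norm of a real vector. -/
noncomputable def rvnorm {ι : Type*} [Fintype ι] (v : ι → ℝ) : ℝ :=
  Real.sqrt (∑ i, (v i) ^ 2)

/-- Standard Hermitian inner product, conjugate-linear in the first argument. -/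
noncomputable def hinner {n : ℕ} (a x : Fin n → ℂ) : ℂ := ∑ i, conj (a i) * x i

/-- dist(x, x̂) = min over unimodular ω of ‖x − ω·x̂‖₂. -/
noncomputable def pdist {n : ℕ} (x xhat : Fin n → ℂ) : ℝ :=
  ⨅ ω : {ω : ℂ // ‖ω‖ = 1}, evnorm (x - (ω : ℂ) • xhat)

/-- Operator (spectral) norm of a complex matrix w.r.t. Euclidean norms. -/
noncomputable def matOpNorm {ι κ : Type*} [Fintype ι] [Fintype κ] [DecidableEq κ]
    (M : Matrix ι κ ℂ) : ℝ :=
  ‖LinearMap.toContinuousLinearMap (Matrix.toEuclideanLin M)‖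

lemma evnorm_smul {ι : Type*} [Fintype ι] (s : ℂ) (v : ι → ℂ) :
    evnorm (s • v) = ‖s‖ * evnorm v := by
  unfold evnorm
  have : ∀ i, ‖(s • v) i‖ ^ 2 = ‖s‖ ^ 2 * ‖v i‖ ^ 2 := by
    intro i
    simp [Pi.smul_apply, norm_mul, mul_pow]
  rw [Finset.sum_congr rfl (fun i _ => this i), ← Finset.mul_sum,
    Real.sqrt_mul (by positivity), Real.sqrt_sq (by positivity)]

/-- The phase selection of the simple Kaczmarz method minimizes the
step length among all phase choices. -/
theorem stmt2 {n : ℕ} (a x : Fin n → ℂ) (ha : a ≠ 0) (yr : ℝ) (hyr : 0 ≤ yr)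
    (xstep : ℂ → (Fin n → ℂ))
    (hxstep : ∀ ω : ℂ, xstep ω =
      x + ((((Real.sqrt yr : ℝ) : ℂ) * ω - hinner a x) / ((evnorm a ^ 2 : ℝ) : ℂ)) • a) :
    ∀ ω : ℂ, ‖ω‖ = 1 →
      evnorm (xstep (phase (hinner a x)) - x) ≤ evnorm (xstep ω - x) := by
  intro ω hω
  set c := hinner a x with hc
  set r := Real.sqrt yr with hr
  have hr0 : 0 ≤ r := Real.sqrt_nonneg _
  have hdiff : ∀ μ : ℂ, xstep μ - x = (((r:ℂ) * μ - c) / ((evnorm a ^ 2 : ℝ) : ℂ)) • a := by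
    intro μ; rw [hxstep μ]; abel
  have key : ‖(r:ℂ) * phase c - c‖ ≤ ‖(r:ℂ) * ω - c‖ := by
    have habs : ‖(r:ℂ) * phase c - c‖ = |r - ‖c‖| := by
      by_cases h : c = 0
      · simp [phase, h, abs_of_nonneg hr0]
      · have hcabs : ((‖c‖ : ℝ) : ℂ) ≠ 0 := by
          exact_mod_cast (norm_ne_zero_iff.mpr h)
        have : (r:ℂ) * phase c - c = ((r:ℂ) - ((‖c‖ : ℝ) : ℂ)) * (c / ((‖c‖ : ℝ) : ℂ)) := by
          rw [phase, if_neg h]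
          field_simp [phase, h]
        rw [this, norm_mul, norm_div, Complex.norm_real, norm_norm,
          div_self (norm_ne_zero_iff.mpr h), mul_one, ← Complex.ofReal_sub, Complex.norm_real,
          Real.norm_eq_abs]
    rw [habs]
    calc |r - ‖c‖| = |‖(r:ℂ) * ω‖ - ‖c‖| := by
          rw [norm_mul, hω, mul_one, Complex.norm_real, Real.norm_eq_abs, abs_of_nonneg hr0]
      _ ≤ ‖(r:ℂ) * ω - c‖ := abs_norm_sub_norm_le _ _
  rw [hdiff, hdiff, evnorm_smul, evnorm_smul]
  apply mul_le_mul_of_nonneg_right _ (Real.sqrt_nonneg _)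
  rw [norm_div, norm_div]
  gcongr
end

section
/- Let a ∈ ℂ^n be nonzero, x ∈ ℂ^n, and y_r ≥ 0 a real number. Define x⁺ = x + ((√(y_r)·phase(⟨a,x⟩) − ⟨a,x⟩)/‖a‖₂²)·a. Then |⟨a,x⁺⟩| = √(y_r), and for every w ∈ ℂ^n with |⟨a,w⟩| = √(y_r) one has ‖x⁺ − x‖₂ ≤ ‖w − x‖₂. That is, the simple Kaczmarz update is a metric projection of x onto the nonconvex set { w ∈ ℂ^n : |⟨a,w⟩| = √(y_r) }. -/
open scoped BigOperators ComplexConjugate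

lemma abs_phase (s : ℂ) : ‖phase s‖ = 1 := by
  unfold phase
  split_ifs with h
  · simp
  · simp [h]

lemma evnorm_eq_norm {n : ℕ} (v : Fin n → ℂ) :
    evnorm v = ‖(WithLp.toLp 2 v : EuclideanSpace ℂ (Fin n))‖ := by
  rw [EuclideanSpace.norm_eq]
  simp [evnorm]

lemma hinner_eq_inner {n : ℕ} (a x : Fin n → ℂ) :
    hinner a x = (inner ℂ (WithLp.toLp 2 a : EuclideanSpace ℂ (Fin n))
      (WithLp.toLp 2 x : EuclideanSpace ℂ (Fin n)) : ℂ) := by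
  simp [hinner, PiLp.inner_apply, RCLike.inner_apply, mul_comm]

lemma phase_key (t : ℝ) (ht : 0 ≤ t) (s : ℂ) :
    ‖(t : ℂ) * phase s - s‖ = |t - ‖s‖| := by
  by_cases hs : s = 0
  · simp [hs, phase]
  · have h1 : (t : ℂ) * phase s - s = ((t - ‖s‖ : ℝ) : ℂ) * phase s := by
      have habs : ((‖s‖ : ℝ) : ℂ) ≠ 0 := by
        exact_mod_cast norm_ne_zero_iff.mpr hs
      unfold phase
      rw [if_neg hs]
      field_simp
      push_cast
      ring
    rw [h1, norm_mul, abs_phase, Complex.norm_real, Real.norm_eq_abs, mul_one]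

/-- The simple Kaczmarz update is a metric projection of x onto
the nonconvex set { w : |⟨a,w⟩| = √yᵣ }. -/
theorem stmt3 {n : ℕ} (a x : Fin n → ℂ) (ha : a ≠ 0) (yr : ℝ) (hyr : 0 ≤ yr)
    (xplus : Fin n → ℂ)
    (hxplus : xplus =
      x + ((((Real.sqrt yr : ℝ) : ℂ) * phase (hinner a x) - hinner a x) /
        ((evnorm a ^ 2 : ℝ) : ℂ)) • a) :
    ‖hinner a xplus‖ = Real.sqrt yr ∧
    ∀ w : Fin n → ℂ, ‖hinner a w‖ = Real.sqrt yr →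
      evnorm (xplus - x) ≤ evnorm (w - x) := by
  set s : ℂ := hinner a x with hs
  set t : ℝ := Real.sqrt yr with htdef
  have ht : 0 ≤ t := Real.sqrt_nonneg _
  have hane : (WithLp.toLp 2 a : EuclideanSpace ℂ (Fin n)) ≠ 0 := fun h => ha (by simpa using congrArg WithLp.ofLp h)
  set na : ℝ := ‖(WithLp.toLp 2 a : EuclideanSpace ℂ (Fin n))‖ with hna
  have hna0 : 0 < na := norm_pos_iff.mpr hane
  have hevna : evnorm a = na := evnorm_eq_norm a
  have haa : hinner a a = ((na ^ 2 : ℝ) : ℂ) := by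
    rw [hinner_eq_inner, inner_self_eq_norm_sq_to_K]
    push_cast
    rfl
  set c : ℂ := ((t : ℂ) * phase s - s) / ((evnorm a ^ 2 : ℝ) : ℂ) with hc
  have hna2ne : ((na ^ 2 : ℝ) : ℂ) ≠ 0 := by
    exact_mod_cast pow_ne_zero 2 hna0.ne'
  have hlin : hinner a xplus = s + c * hinner a a := by
    rw [hxplus, hinner_eq_inner, hinner_eq_inner a a, hs, hinner_eq_inner a x]
    rw [WithLp.toLp_add, WithLp.toLp_smul, inner_add_right, inner_smul_right]
  have hval : hinner a xplus = (t : ℂ) * phase s := by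
    rw [hlin, haa, hc, hevna, div_mul_cancel₀ _ hna2ne]
    ring
  have hdiff : xplus - x = c • a := by rw [hxplus]; abel
  have hnorm_plus : evnorm (xplus - x) = |t - ‖s‖| / na := by
    rw [hdiff, evnorm_eq_norm]
    have : ‖(WithLp.toLp 2 (c • a) : EuclideanSpace ℂ (Fin n))‖ = ‖c‖ * na := by
      rw [hna, WithLp.toLp_smul]; exact norm_smul c (WithLp.toLp 2 a : EuclideanSpace ℂ (Fin n))
    rw [this]
    have hcabs : ‖c‖ = |t - ‖s‖| / na ^ 2 := by
      rw [hc, hevna, norm_div,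
        phase_key t ht s, Complex.norm_real, Real.norm_eq_abs, abs_of_pos (pow_pos hna0 2)]
    rw [hcabs]
    field_simp
  constructor
  · rw [hval, norm_mul, abs_phase, Complex.norm_real, Real.norm_eq_abs, mul_one, abs_of_nonneg ht]
  · intro w hw
    have hcs : ‖hinner a (w - x)‖ ≤ na * evnorm (w - x) := by
      rw [hinner_eq_inner, evnorm_eq_norm]
      exact norm_inner_le_norm _ _
    have hlin2 : hinner a (w - x) = hinner a w - s := by
      rw [hinner_eq_inner, hinner_eq_inner a w, hs, hinner_eq_inner a x]
      rw [WithLp.toLp_sub]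
      exact inner_sub_right _ _ _
    have htri : |t - ‖s‖| ≤ ‖hinner a (w - x)‖ := by
      rw [hlin2, ← hw]
      exact abs_norm_sub_norm_le _ _
    rw [hnorm_plus, div_le_iff₀ hna0]
    calc |t - ‖s‖| ≤ ‖hinner a (w - x)‖ := htri
      _ ≤ na * evnorm (w - x) := hcs
      _ = evnorm (w - x) * na := mul_comm _ _
end
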